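/- Suppose S and T are l-symbols in the same family (same multiset of entries) with S ≠ T, and let j be minimal with z(S)_j ≠ z(T)_j where T = S_F is the greedy symbol. Then there exists a symbol T' in the family with T' ⊴ S in dominance order, z(T')_i = z(S_F)_i for 1 ≤ i ≤ j - 1, and z(T')_j = z(S_F)_j. -/

import Mathlib

set_option linter.unusedVariables false


open scoped BigOperators

/-- A finite `l`-symbol of charge `s`: an `l`-tuple of strictly increasing
integer sequences, the `i`-th of length `s i`. -/
structure FinSymbol (l : ℕ) (s : Fin l → ℕ) where
  β : (i : Fin l) → Fin (s i) → ℤ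
  strict : ∀ i : Fin l, StrictMono (β i)

/-- The weight `l(s_i - j) + i - 1` attached to the `j`-th position of the `i`-th row
(here `p.1`, `p.2` are the 0-based versions of `i - 1`, `j - 1`). -/
def wt {l : ℕ} {s : Fin l → ℕ} (p : (i : Fin l) × Fin (s i)) : ℕ :=
  l * (s p.1 - 1 - p.2.val) + p.1.val

/-- `b'(S) = Σ_{i,j} (l(s_i - j) + i - 1) β^i_j`. -/
def bprime {l : ℕ} {s : Fin l → ℕ} (S : FinSymbol l s) : ℤ :=
  ∑ p : (i : Fin l) × Fin (s i), (wt p : ℤ) * S.β p.1 p.2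

/-- `b(S) = Σ_{i,j} (l(s_i - j) + i - 1) (β^i_j - j + 1)` (with `j` 1-based). -/
def bInv {l : ℕ} {s : Fin l → ℕ} (S : FinSymbol l s) : ℤ :=
  ∑ p : (i : Fin l) × Fin (s i), (wt p : ℤ) * (S.β p.1 p.2 - (p.2.val : ℤ))

/-- The underlying multiset of entries of a symbol. -/
def entries {l : ℕ} {s : Fin l → ℕ} (S : FinSymbol l s) : Multiset ℤ :=
  (Finset.univ : Finset ((i : Fin l) × Fin (s i))).val.map fun p => S.β p.1 p.2

/-- The reading sequence `z(S)` of a symbol, relative to an enumeration `e` of the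
positions along which the weights are strictly decreasing. -/
def zseq {l : ℕ} {s : Fin l → ℕ} {N : ℕ} (e : Fin N ≃ ((i : Fin l) × Fin (s i)))
    (S : FinSymbol l s) (k : Fin N) : ℤ :=
  S.β (e k).1 (e k).2

/-- Within a row, the weight strictly decreases along the row. -/
lemma wt_row_lt {l : ℕ} {s : Fin l → ℕ} (i : Fin l) (t t' : Fin (s i))
    (h : t.val < t'.val) : wt ⟨i, t'⟩ < wt ⟨i, t⟩ := by
  have hl : 0 < l := i.pos
  have h2 : t'.val < s i := t'.isLt
  have key : (s i - 1 - t'.val) + 1 ≤ s i - 1 - t.val := by omega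
  have h3 := Nat.mul_le_mul_left l key
  rw [Nat.mul_add, Nat.mul_one] at h3
  show l * (s i - 1 - t'.val) + i.val < l * (s i - 1 - t.val) + i.val
  omega

/-- Shifting two positions in two rows by the same amount preserves the
strict comparison of weights. -/
lemma wt_shift_lt {l : ℕ} {s : Fin l → ℕ} (p q p' q' : (i : Fin l) × Fin (s i)) (c : ℕ)
    (h1 : p'.1 = p.1) (h2 : q'.1 = q.1)
    (hp : p'.2.val = p.2.val + c) (hq : q'.2.val = q.2.val + c)
    (hw : wt p < wt q) : wt p' < wt q' := by
  have hs1 : s p'.1 = s p.1 := by rw [h1]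
  have hs2 : s q'.1 = s q.1 := by rw [h2]
  have hv1 : p'.1.val = p.1.val := by rw [h1]
  have hv2 : q'.1.val = q.1.val := by rw [h2]
  have hb1 : p'.2.val < s p'.1 := p'.2.isLt
  have hb2 : q'.2.val < s q'.1 := q'.2.isLt
  have hw' : l * (s p.1 - 1 - p.2.val) + p.1.val < l * (s q.1 - 1 - q.2.val) + q.1.val := hw
  show l * (s p'.1 - 1 - p'.2.val) + p'.1.val < l * (s q'.1 - 1 - q'.2.val) + q'.1.val
  have hcc : s p'.1 - 1 - p'.2.val = (s p.1 - 1 - p.2.val) - c := by omega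
  have hdd : s q'.1 - 1 - q'.2.val = (s q.1 - 1 - q.2.val) - c := by omega
  rw [hcc, hdd]
  have e1 : l * ((s p.1 - 1 - p.2.val) - c) + l * c = l * (s p.1 - 1 - p.2.val) := by
    rw [← Nat.mul_add]
    congr 1
    omega
  have e2 : l * ((s q.1 - 1 - q.2.val) - c) + l * c = l * (s q.1 - 1 - q.2.val) := by
    rw [← Nat.mul_add]
    congr 1
    omega
  omega

/-- Extensionality for positions. -/
lemma sigma_fin_ext {l : ℕ} {s : Fin l → ℕ} {p q : (i : Fin l) × Fin (s i)}
    (h1 : p.1 = q.1) (h2 : p.2.val = q.2.val) : p = q := by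
  obtain ⟨pi, pt⟩ := p
  obtain ⟨qi, qt⟩ := q
  have h1' : pi = qi := h1
  subst h1'
  exact congrArg (Sigma.mk pi) (Fin.ext h2)

set_option maxHeartbeats 1000000 in
/-- the exchange step. If `S ≠ T` are in the same family, `T` is the greedy
symbol, and `j` is minimal with `z(S)_j ≠ z(T)_j`, then there is a symbol `T'` in the
family with `T' ⊴ S` whose reading sequence agrees with that of `T` up to position `j`. -/
theorem stmt8 (l : ℕ) (s : Fin l → ℕ) (hs : ∀ i j : Fin l, i ≤ j → s j ≤ s i)
    (N : ℕ) (hN : N = ∑ i, s i)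
    (e : Fin N ≃ ((i : Fin l) × Fin (s i)))
    (he : StrictAnti fun k : Fin N => wt (e k))
    (S T : FinSymbol l s) (hST : entries S = entries T) (hne : S ≠ T)
    (hgreedy : ∀ S' : FinSymbol l s, entries S' = entries T →
      ∀ i : Fin N, (∀ k < i, zseq e S' k = zseq e T k) → zseq e T i ≤ zseq e S' i)
    (j : Fin N) (hj : zseq e S j ≠ zseq e T j)
    (hjmin : ∀ k < j, zseq e S k = zseq e T k) :
    ∃ T' : FinSymbol l s, entries T' = entries T ∧
      (∀ m : Fin N, ∑ k ∈ Finset.Iic m, zseq e T' k ≤ ∑ k ∈ Finset.Iic m, zseq e S k) ∧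
      (∀ i < j, zseq e T' i = zseq e T i) ∧ zseq e T' j = zseq e T j := by
  classical
  rcases hej : e j with ⟨i₀, a₀⟩
  set u : ℤ := S.β i₀ a₀ with hu
  set v : ℤ := T.β i₀ a₀ with hv
  have hzSj : zseq e S j = u := by rw [zseq, hej]
  have hzTj : zseq e T j = v := by rw [zseq, hej]
  have huv : v < u := by
    have h1 : zseq e T j ≤ zseq e S j := hgreedy S hST j hjmin
    rw [hzSj, hzTj] at h1
    rcases lt_or_eq_of_le h1 with h | h
    · exact h
    · exact absurd (by rw [hzSj, hzTj, h]) hj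
  -- entries as a map over reading positions
  have hent : ∀ X : FinSymbol l s,
      entries X = Multiset.map (fun k => zseq e X k) Finset.univ.val := by
    intro X
    show Multiset.map _ Finset.univ.val = _
    conv_lhs => rw [← Finset.map_univ_equiv e, Finset.map_val, Multiset.map_map]
    rfl
  have hcount : ∀ X : FinSymbol l s,
      (Finset.univ.filter (fun k => v = zseq e X k)).card = Multiset.count v (entries X) := by
    intro X
    rw [hent X, Multiset.count_map]
    rfl
  -- a spare occurrence of v after position j
  have hspare : ∃ k : Fin N, j < k ∧ zseq e S k = v := by
    by_contra hno
    push_neg at hno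
    have hSsubT : (Finset.univ.filter (fun k => v = zseq e S k)) ⊆
        (Finset.univ.filter (fun k => v = zseq e T k)) := by
      intro k hk
      rw [Finset.mem_filter] at hk ⊢
      refine ⟨Finset.mem_univ _, ?_⟩
      have hkj : k < j := by
        rcases lt_trichotomy k j with h | h | h
        · exact h
        · exfalso
          subst h
          rw [hzSj] at hk
          exact absurd hk.2 (ne_of_lt huv)
        · exact absurd hk.2.symm (hno k h)
      rw [← hjmin k hkj]
      exact hk.2
    have hjT : j ∈ Finset.univ.filter (fun k => v = zseq e T k) := by
      rw [Finset.mem_filter]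
      exact ⟨Finset.mem_univ _, hzTj.symm⟩
    have hjS : j ∉ Finset.univ.filter (fun k => v = zseq e S k) := by
      rw [Finset.mem_filter]
      rintro ⟨-, h⟩
      rw [hzSj] at h
      exact absurd h (ne_of_lt huv)
    have hins : insert j (Finset.univ.filter (fun k => v = zseq e S k)) ⊆
        Finset.univ.filter (fun k => v = zseq e T k) := by
      rw [Finset.insert_subset_iff]
      exact ⟨hjT, hSsubT⟩
    have hc1 : (Finset.univ.filter (fun k => v = zseq e S k)).card + 1 ≤
        (Finset.univ.filter (fun k => v = zseq e T k)).card := by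
      rw [← Finset.card_insert_of_notMem hjS]
      exact Finset.card_le_card hins
    have hc2 : (Finset.univ.filter (fun k => v = zseq e S k)).card =
        (Finset.univ.filter (fun k => v = zseq e T k)).card := by
      rw [hcount S, hcount T, hST]
    omega
  obtain ⟨kv, hjkv, hkv⟩ := hspare
  rcases hekv : e kv with ⟨r, a⟩
  have hra : S.β r a = v := by rw [← hkv, zseq, hekv]
  -- weight comparisons
  have hwj : wt (⟨r, a⟩ : (i : Fin l) × Fin (s i)) < wt (⟨i₀, a₀⟩ : (i : Fin l) × Fin (s i)) := by
    have h1 := he hjkv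
    simp only [hej, hekv] at h1
    exact h1
  have hsymm_lt : ∀ p q : (i : Fin l) × Fin (s i), wt p < wt q → e.symm q < e.symm p := by
    intro p q h
    have h2 : (fun k => wt (e k)) (e.symm p) < (fun k => wt (e k)) (e.symm q) := by
      simpa using h
    exact (he.lt_iff_gt).mp h2
  have hir : r ≠ i₀ := by
    intro h
    subst h
    have hlt : a < a₀ := by
      apply (S.strict r).lt_iff_lt.mp
      rw [hra, ← hu]
      exact huv
    exact absurd hwj (lt_asymm (wt_row_lt r a a₀ hlt))
  have hprev : ∀ t : Fin (s i₀), t.val < a₀.val → S.β i₀ t < v := by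
    intro t ht
    have hwt : wt (⟨i₀, a₀⟩ : (i : Fin l) × Fin (s i)) < wt ⟨i₀, t⟩ := wt_row_lt i₀ t a₀ ht
    have hkj : e.symm ⟨i₀, t⟩ < j := by
      have h1 := hsymm_lt _ _ hwt
      rwa [← hej, Equiv.symm_apply_apply] at h1
    have h2 := hjmin _ hkj
    simp only [zseq] at h2
    rw [Equiv.apply_symm_apply] at h2
    rw [h2, hv]
    exact T.strict i₀ (show t < a₀ from ht)
  -- arithmetic setup
  have hl0 : 0 < l := i₀.pos
  have ha₀lt : a₀.val < s i₀ := a₀.isLt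
  have halt : a.val < s r := a.isLt
  set m : ℕ := s i₀ - a₀.val with hm
  set n : ℕ := s r - a.val with hn
  have hm0 : 0 < m := by omega
  have hn0 : 0 < n := by omega
  have hnm : n ≤ m := by
    by_contra hc
    push_neg at hc
    have key : (s i₀ - 1 - a₀.val) + 1 ≤ s r - 1 - a.val := by omega
    have h3 := Nat.mul_le_mul_left l key
    rw [Nat.mul_add, Nat.mul_one] at h3
    have h4 : i₀.val < l := i₀.isLt
    have h5 : l * (s r - 1 - a.val) + r.val < l * (s i₀ - 1 - a₀.val) + i₀.val := hwj
    omega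
  -- the two tails
  obtain ⟨A, hAval⟩ : ∃ A : ℕ → ℤ, ∀ (c : ℕ) (h : a₀.val + c < s i₀),
      A c = S.β i₀ ⟨a₀.val + c, h⟩ :=
    ⟨fun c => if h : a₀.val + c < s i₀ then S.β i₀ ⟨a₀.val + c, h⟩ else 0,
      fun c h => dif_pos h⟩
  obtain ⟨B, hBval⟩ : ∃ B : ℕ → ℤ, ∀ (c : ℕ) (h : a.val + c < s r),
      B c = S.β r ⟨a.val + c, h⟩ :=
    ⟨fun c => if h : a.val + c < s r then S.β r ⟨a.val + c, h⟩ else 0,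
      fun c h => dif_pos h⟩
  have hA0 : A 0 = u := by
    rw [hAval 0 (by omega), hu]
    congr 1
  have hB0 : B 0 = v := by
    rw [hBval 0 (by omega), ← hra]
    congr 1
  have hAlt : ∀ c c' : ℕ, c < c' → a₀.val + c' < s i₀ → A c < A c' := by
    intro c c' h h'
    rw [hAval c (by omega), hAval c' h']
    exact S.strict i₀ (Fin.mk_lt_mk.mpr (by omega))
  have hAle : ∀ c c' : ℕ, c ≤ c' → a₀.val + c' < s i₀ → A c ≤ A c' := by
    intro c c' h h'
    rcases eq_or_lt_of_le h with h'' | h''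
    · rw [h'']
    · exact le_of_lt (hAlt c c' h'' h')
  have hBlt : ∀ c c' : ℕ, c < c' → a.val + c' < s r → B c < B c' := by
    intro c c' h h'
    rw [hBval c (by omega), hBval c' h']
    exact S.strict r (Fin.mk_lt_mk.mpr (by omega))
  have hBle : ∀ c c' : ℕ, c ≤ c' → a.val + c' < s r → B c ≤ B c' := by
    intro c c' h h'
    rcases eq_or_lt_of_le h with h'' | h''
    · rw [h'']
    · exact le_of_lt (hBlt c c' h'' h')
  -- the crossing point n'
  have hQex : ∃ t : ℕ, 1 ≤ t ∧ (t = n ∨ (t < n ∧ A (t - 1) < B t)) := ⟨n, hn0, Or.inl rfl⟩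
  obtain ⟨n', hn'1, hn'spec2, hn'min, hn'n⟩ :
      ∃ n' : ℕ, 1 ≤ n' ∧ (n' = n ∨ (n' < n ∧ A (n' - 1) < B n')) ∧
        (∀ t, 1 ≤ t → t < n' → t < n → B t ≤ A (t - 1)) ∧ n' ≤ n := by
    refine ⟨Nat.find hQex, (Nat.find_spec hQex).1, (Nat.find_spec hQex).2, ?_,
      Nat.find_le ⟨hn0, Or.inl rfl⟩⟩
    intro t h1 h2 h3
    have h4 := Nat.find_min hQex h2
    push_neg at h4
    exact (h4 h1).2 h3
  have hBAlt : ∀ c : ℕ, c < n' → B c < A c := by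
    intro c hc
    rcases Nat.eq_zero_or_pos c with h0 | h1
    · subst h0
      rw [hA0, hB0]
      exact huv
    · have h2 : B c ≤ A (c - 1) := hn'min c h1 hc (lt_of_lt_of_le hc hn'n)
      have h3 : A (c - 1) < A c := hAlt (c - 1) c (by omega) (by omega)
      exact lt_of_le_of_lt h2 h3
  have hcross1 : n' < n → A (n' - 1) < B n' := by
    intro h
    rcases hn'spec2 with h1 | h1
    · omega
    · exact h1.2
  have hcross2 : n' < m → B (n' - 1) < A n' := by
    intro h
    rcases eq_or_lt_of_le hn'1 with h1 | h1
    · rw [← h1]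
      rw [show (1 : ℕ) - 1 = 0 from rfl, hB0]
      calc v < u := huv
        _ = A 0 := hA0.symm
        _ < A 1 := hAlt 0 1 one_pos (by omega)
    · have h2 : B (n' - 1) ≤ A (n' - 1 - 1) := hn'min (n' - 1) (by omega) (by omega) (by omega)
      have h3 : A (n' - 1 - 1) < A n' := hAlt _ _ (by omega) (by omega)
      exact lt_of_le_of_lt h2 h3
  -- the exchanged symbol
  obtain ⟨β', hβ'i₀, hβ'r, hβ'else⟩ : ∃ β' : (i : Fin l) → Fin (s i) → ℤ,
      (∀ t : Fin (s i₀), a₀.val ≤ t.val → t.val < a₀.val + n' →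
        β' i₀ t = B (t.val - a₀.val)) ∧
      (∀ t : Fin (s r), a.val ≤ t.val → t.val < a.val + n' →
        β' r t = A (t.val - a.val)) ∧
      (∀ (i : Fin l) (t : Fin (s i)),
        ¬(i = i₀ ∧ a₀.val ≤ t.val ∧ t.val < a₀.val + n') →
        ¬(i = r ∧ a.val ≤ t.val ∧ t.val < a.val + n') → β' i t = S.β i t) := by
    exact ⟨fun i t =>
      if i = i₀ ∧ a₀.val ≤ t.val ∧ t.val < a₀.val + n' then B (t.val - a₀.val)
      else if i = r ∧ a.val ≤ t.val ∧ t.val < a.val + n' then A (t.val - a.val)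
      else S.β i t,
      fun t h1 h2 => if_pos ⟨rfl, h1, h2⟩,
      fun t h1 h2 => (if_neg (fun hc => hir hc.1)).trans (if_pos ⟨rfl, h1, h2⟩),
      fun i t h1 h2 => (if_neg h1).trans (if_neg h2)⟩
  have hstrict : ∀ i : Fin l, StrictMono (β' i) := by
    intro i
    by_cases hii : i = i₀
    · subst hii
      intro t t' htt'
      have hval : t.val < t'.val := htt'
      by_cases h1 : a₀.val ≤ t.val ∧ t.val < a₀.val + n' <;>
        by_cases h2 : a₀.val ≤ t'.val ∧ t'.val < a₀.val + n'
      · rw [hβ'i₀ t h1.1 h1.2, hβ'i₀ t' h2.1 h2.2]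
        exact hBlt _ _ (by omega) (by omega)
      · have h2' : a₀.val + n' ≤ t'.val := by omega
        have hn'm : n' < m := by
          have := t'.isLt
          omega
        rw [hβ'i₀ t h1.1 h1.2,
          hβ'else i t' (by rintro ⟨-, h3, h4⟩; omega) (fun hc => hir hc.1.symm)]
        calc B (t.val - a₀.val) ≤ B (n' - 1) := hBle _ _ (by omega) (by omega)
          _ < A n' := hcross2 hn'm
          _ ≤ S.β i t' := by
            rw [hAval n' (by omega)]
            exact (S.strict i).monotone (Fin.le_def.mpr (by simpa using h2'))
      · have h1' : t.val < a₀.val := by omega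
        rw [hβ'else i t (fun hc => h1 hc.2) (fun hc => hir hc.1.symm), hβ'i₀ t' h2.1 h2.2]
        calc S.β i t < v := hprev t h1'
          _ = B 0 := hB0.symm
          _ ≤ B (t'.val - a₀.val) := hBle _ _ (by omega) (by omega)
      · rw [hβ'else i t (fun hc => h1 hc.2) (fun hc => hir hc.1.symm),
          hβ'else i t' (fun hc => h2 hc.2) (fun hc => hir hc.1.symm)]
        exact S.strict i htt'
    · by_cases hirr : i = r
      · subst hirr
        intro t t' htt'
        have hval : t.val < t'.val := htt'
        by_cases h1 : a.val ≤ t.val ∧ t.val < a.val + n' <;>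
          by_cases h2 : a.val ≤ t'.val ∧ t'.val < a.val + n'
        · rw [hβ'r t h1.1 h1.2, hβ'r t' h2.1 h2.2]
          exact hAlt _ _ (by omega) (by omega)
        · have h2' : a.val + n' ≤ t'.val := by omega
          have hn'n2 : n' < n := by
            have := t'.isLt
            omega
          rw [hβ'r t h1.1 h1.2,
            hβ'else i t' (fun hc => hii hc.1) (by rintro ⟨-, h3, h4⟩; omega)]
          calc A (t.val - a.val) ≤ A (n' - 1) := hAle _ _ (by omega) (by omega)
            _ < B n' := hcross1 hn'n2
            _ ≤ S.β i t' := by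
              rw [hBval n' (by omega)]
              exact (S.strict i).monotone (Fin.le_def.mpr (by simpa using h2'))
        · have h1' : t.val < a.val := by omega
          rw [hβ'else i t (fun hc => hii hc.1) (by rintro ⟨-, h3, h4⟩; omega),
            hβ'r t' h2.1 h2.2]
          calc S.β i t < S.β i a := S.strict i (show t < a from h1')
            _ = v := hra
            _ < u := huv
            _ = A 0 := hA0.symm
            _ ≤ A (t'.val - a.val) := hAle _ _ (by omega) (by omega)
        · rw [hβ'else i t (fun hc => hii hc.1) (fun hc => h1 hc.2),
            hβ'else i t' (fun hc => hii hc.1) (fun hc => h2 hc.2)]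
          exact S.strict i htt'
      · intro t t' htt'
        rw [hβ'else i t (fun hc => hii hc.1) (fun hc => hirr hc.1),
          hβ'else i t' (fun hc => hii hc.1) (fun hc => hirr hc.1)]
        exact S.strict i htt'
  -- the involutive swap of positions
  obtain ⟨σ, hσ1, hσ2, hσ3⟩ : ∃ σ : ((i : Fin l) × Fin (s i)) → ((i : Fin l) × Fin (s i)),
      (∀ (p : (i : Fin l) × Fin (s i))
        (h : p.1 = i₀ ∧ a₀.val ≤ p.2.val ∧ p.2.val < a₀.val + n'),
        σ p = ⟨r, ⟨a.val + (p.2.val - a₀.val), by obtain ⟨-, hx, hy⟩ := h; omega⟩⟩) ∧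
      (∀ (p : (i : Fin l) × Fin (s i))
        (h : p.1 = r ∧ a.val ≤ p.2.val ∧ p.2.val < a.val + n'),
        σ p = ⟨i₀, ⟨a₀.val + (p.2.val - a.val), by obtain ⟨-, hx, hy⟩ := h; omega⟩⟩) ∧
      (∀ p : ((i : Fin l) × Fin (s i)),
        ¬(p.1 = i₀ ∧ a₀.val ≤ p.2.val ∧ p.2.val < a₀.val + n') →
        ¬(p.1 = r ∧ a.val ≤ p.2.val ∧ p.2.val < a.val + n') → σ p = p) := by
    exact ⟨fun p =>
      if h1 : p.1 = i₀ ∧ a₀.val ≤ p.2.val ∧ p.2.val < a₀.val + n' then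
        ⟨r, ⟨a.val + (p.2.val - a₀.val), by obtain ⟨-, hx, hy⟩ := h1; omega⟩⟩
      else if h2 : p.1 = r ∧ a.val ≤ p.2.val ∧ p.2.val < a.val + n' then
        ⟨i₀, ⟨a₀.val + (p.2.val - a.val), by obtain ⟨-, hx, hy⟩ := h2; omega⟩⟩
      else p,
      fun p h => dif_pos h,
      fun p h => (dif_neg (fun hc => hir (h.1.symm.trans hc.1))).trans (dif_pos h),
      fun p h1 h2 => (dif_neg h1).trans (dif_neg h2)⟩
  have hσc1 : ∀ (p : (i : Fin l) × Fin (s i))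
      (h : p.1 = i₀ ∧ a₀.val ≤ p.2.val ∧ p.2.val < a₀.val + n'),
      (σ p).1 = r ∧ (σ p).2.val = a.val + (p.2.val - a₀.val) := by
    intro p h
    rw [hσ1 p h]
    exact ⟨rfl, rfl⟩
  have hσc2 : ∀ (p : (i : Fin l) × Fin (s i))
      (h : p.1 = r ∧ a.val ≤ p.2.val ∧ p.2.val < a.val + n'),
      (σ p).1 = i₀ ∧ (σ p).2.val = a₀.val + (p.2.val - a.val) := by
    intro p h
    rw [hσ2 p h]
    exact ⟨rfl, rfl⟩
  have hσσ : ∀ p, σ (σ p) = p := by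
    intro p
    by_cases h1 : p.1 = i₀ ∧ a₀.val ≤ p.2.val ∧ p.2.val < a₀.val + n'
    · obtain ⟨hf, hv1⟩ := hσc1 p h1
      have h2 : (σ p).1 = r ∧ a.val ≤ (σ p).2.val ∧ (σ p).2.val < a.val + n' :=
        ⟨hf, by rw [hv1]; omega, by rw [hv1]; omega⟩
      obtain ⟨hf2, hv2⟩ := hσc2 (σ p) h2
      refine sigma_fin_ext (hf2.trans h1.1.symm) ?_
      rw [hv2, hv1]
      omega
    · by_cases h2 : p.1 = r ∧ a.val ≤ p.2.val ∧ p.2.val < a.val + n'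
      · obtain ⟨hf, hv1⟩ := hσc2 p h2
        have h3 : (σ p).1 = i₀ ∧ a₀.val ≤ (σ p).2.val ∧ (σ p).2.val < a₀.val + n' :=
          ⟨hf, by rw [hv1]; omega, by rw [hv1]; omega⟩
        obtain ⟨hf2, hv2⟩ := hσc1 (σ p) h3
        refine sigma_fin_ext (hf2.trans h2.1.symm) ?_
        rw [hv2, hv1]
        omega
      · rw [hσ3 p h1 h2, hσ3 p h1 h2]
  have hσval : ∀ p : ((i : Fin l) × Fin (s i)), β' p.1 p.2 = S.β (σ p).1 (σ p).2 := by
    intro p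
    obtain ⟨pi, pt⟩ := p
    by_cases h1 : pi = i₀ ∧ a₀.val ≤ pt.val ∧ pt.val < a₀.val + n'
    · obtain ⟨hpa, hpb, hpc⟩ := h1
      subst hpa
      rw [hσ1 ⟨pi, pt⟩ ⟨rfl, hpb, hpc⟩]
      rw [hβ'i₀ pt hpb hpc]
      exact hBval _ (by omega)
    · by_cases h2 : pi = r ∧ a.val ≤ pt.val ∧ pt.val < a.val + n'
      · obtain ⟨hpa, hpb, hpc⟩ := h2
        subst hpa
        rw [hσ2 ⟨pi, pt⟩ ⟨rfl, hpb, hpc⟩]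
        rw [hβ'r pt hpb hpc]
        exact hAval _ (by omega)
      · rw [hσ3 ⟨pi, pt⟩ h1 h2, hβ'else pi pt h1 h2]
  have hganti : ∀ p : ((i : Fin l) × Fin (s i)),
      β' p.1 p.2 - S.β p.1 p.2 = -(β' (σ p).1 (σ p).2 - S.β (σ p).1 (σ p).2) := by
    intro p
    have h1 := hσval p
    have h2 := hσval (σ p)
    rw [hσσ p] at h2
    rw [h1, h2]
    ring
  -- entries are preserved
  have hperm : Multiset.map σ Finset.univ.val = Finset.univ.val := by
    have hinv : Function.Involutive σ := hσσ
    have h1 := Finset.map_univ_equiv (Function.Involutive.toPerm σ hinv)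
    have h2 : (Finset.map (Function.Involutive.toPerm σ hinv).toEmbedding Finset.univ).val =
        Multiset.map σ Finset.univ.val := by
      rw [Finset.map_val]
      rfl
    rw [← h2, h1]
  have hentries : entries (⟨β', hstrict⟩ : FinSymbol l s) = entries T := by
    rw [← hST]
    show Multiset.map (fun p : (i : Fin l) × Fin (s i) => β' p.1 p.2) Finset.univ.val =
      Multiset.map (fun p : (i : Fin l) × Fin (s i) => S.β p.1 p.2) Finset.univ.val
    have h1 : (fun p : (i : Fin l) × Fin (s i) => β' p.1 p.2) =
        (fun p : (i : Fin l) × Fin (s i) => S.β p.1 p.2) ∘ σ := funext hσval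
    rw [h1, ← Multiset.map_map, hperm]
  -- positions read before j are untouched
  have hz'pre : ∀ k : Fin N, k < j →
      zseq e (⟨β', hstrict⟩ : FinSymbol l s) k = zseq e S k := by
    intro k hk
    have hwtk : wt (e j) < wt (e k) := he hk
    show β' (e k).1 (e k).2 = S.β (e k).1 (e k).2
    rcases hek : e k with ⟨pi, pt⟩
    rw [hek] at hwtk
    rw [hej] at hwtk
    show β' pi pt = S.β pi pt
    apply hβ'else
    · rintro ⟨hpa, hpb, hpc⟩
      have hs1 : s pi = s i₀ := by rw [hpa]
      have hs2 : pi.val = i₀.val := by rw [hpa]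
      have hwtk' : l * (s i₀ - 1 - a₀.val) + i₀.val < l * (s pi - 1 - pt.val) + pi.val := hwtk
      have hmul : l * (s pi - 1 - pt.val) ≤ l * (s i₀ - 1 - a₀.val) :=
        Nat.mul_le_mul_left l (by omega)
      omega
    · rintro ⟨hpa, hpb, hpc⟩
      have hs1 : s pi = s r := by rw [hpa]
      have hs2 : pi.val = r.val := by rw [hpa]
      have hwtk' : l * (s i₀ - 1 - a₀.val) + i₀.val < l * (s pi - 1 - pt.val) + pi.val := hwtk
      have hwj' : l * (s r - 1 - a.val) + r.val < l * (s i₀ - 1 - a₀.val) + i₀.val := hwj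
      have hmul : l * (s pi - 1 - pt.val) ≤ l * (s r - 1 - a.val) :=
        Nat.mul_le_mul_left l (by omega)
      omega
  -- value at j
  have hz'j : zseq e (⟨β', hstrict⟩ : FinSymbol l s) j = zseq e T j := by
    show β' (e j).1 (e j).2 = T.β (e j).1 (e j).2
    rw [hej]
    rw [hβ'i₀ a₀ (le_refl _) (by omega)]
    rw [show a₀.val - a₀.val = 0 from Nat.sub_self _, hB0]
  -- dominance
  have hdom : ∀ mm : Fin N, ∑ k ∈ Finset.Iic mm, zseq e (⟨β', hstrict⟩ : FinSymbol l s) k ≤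
      ∑ k ∈ Finset.Iic mm, zseq e S k := by
    intro mm
    rw [← sub_nonpos, ← Finset.sum_sub_distrib]
    have hre : ∑ k ∈ Finset.Iic mm, (zseq e (⟨β', hstrict⟩ : FinSymbol l s) k - zseq e S k)
        = ∑ p ∈ (Finset.Iic mm).image (⇑e), (β' p.1 p.2 - S.β p.1 p.2) := by
      rw [Finset.sum_image (fun x _ y _ h => e.injective h)]
      rfl
    rw [hre]
    set Pm := (Finset.Iic mm).image (⇑e) with hPmdef
    have hPmle : ∀ p, p ∈ Pm → e.symm p ≤ mm := by
      intro p hp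
      rw [hPmdef, Finset.mem_image] at hp
      obtain ⟨k, hk1, hk2⟩ := hp
      rw [← hk2, Equiv.symm_apply_apply]
      exact Finset.mem_Iic.mp hk1
    have hPmmem : ∀ p, e.symm p ≤ mm → p ∈ Pm := by
      intro p hp
      rw [hPmdef, Finset.mem_image]
      exact ⟨e.symm p, Finset.mem_Iic.mpr hp, e.apply_symm_apply p⟩
    rw [← Finset.sum_filter_add_sum_filter_not Pm
      (fun p => p.1 = i₀ ∧ a₀.val ≤ p.2.val ∧ p.2.val < a₀.val + n')]
    rw [← Finset.sum_filter_add_sum_filter_not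
      (Pm.filter (fun p => ¬(p.1 = i₀ ∧ a₀.val ≤ p.2.val ∧ p.2.val < a₀.val + n')))
      (fun p => p.1 = r ∧ a.val ≤ p.2.val ∧ p.2.val < a.val + n')]
    set Q1 := Pm.filter (fun p => p.1 = i₀ ∧ a₀.val ≤ p.2.val ∧ p.2.val < a₀.val + n') with hQ1
    set Q2 := (Pm.filter
        (fun p => ¬(p.1 = i₀ ∧ a₀.val ≤ p.2.val ∧ p.2.val < a₀.val + n'))).filter
        (fun p => p.1 = r ∧ a.val ≤ p.2.val ∧ p.2.val < a.val + n') with hQ2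
    have hzero : ∑ p ∈ (Pm.filter
        (fun p => ¬(p.1 = i₀ ∧ a₀.val ≤ p.2.val ∧ p.2.val < a₀.val + n'))).filter
        (fun p => ¬(p.1 = r ∧ a.val ≤ p.2.val ∧ p.2.val < a.val + n')),
        (β' p.1 p.2 - S.β p.1 p.2) = 0 := by
      apply Finset.sum_eq_zero
      intro p hp
      rw [Finset.mem_filter] at hp
      obtain ⟨hpp, hnc2⟩ := hp
      rw [Finset.mem_filter] at hpp
      rw [hβ'else p.1 p.2 hpp.2 hnc2, sub_self]
    rw [hzero, add_zero]
    -- key inequality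
    have hQ2c : ∀ p ∈ Q2, p.1 = r ∧ a.val ≤ p.2.val ∧ p.2.val < a.val + n' :=
      fun p hp => (Finset.mem_filter.mp hp).2
    have hQ2m : ∀ p ∈ Q2, p ∈ Pm :=
      fun p hp => (Finset.mem_filter.mp (Finset.mem_filter.mp hp).1).1
    have hσQ : Finset.image σ Q2 ⊆ Q1 := by
      intro q hq
      rw [Finset.mem_image] at hq
      obtain ⟨p, hp, hpq⟩ := hq
      obtain ⟨hpa, hpb, hpc⟩ := hQ2c p hp
      have hσp1 : (σ p).1 = i₀ := by rw [hσ2 p ⟨hpa, hpb, hpc⟩]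
      have hσp2 : (σ p).2.val = a₀.val + (p.2.val - a.val) := by rw [hσ2 p ⟨hpa, hpb, hpc⟩]
      have hwt : wt p < wt (σ p) := by
        apply wt_shift_lt (⟨r, a⟩ : (i : Fin l) × Fin (s i))
          (⟨i₀, a₀⟩ : (i : Fin l) × Fin (s i)) p (σ p) (p.2.val - a.val) hpa hσp1
          (by show p.2.val = a.val + (p.2.val - a.val); omega)
          (by show (σ p).2.val = a₀.val + (p.2.val - a.val); rw [hσp2]) hwj
      have hlt : e.symm (σ p) < e.symm p := hsymm_lt p (σ p) hwt
      rw [← hpq, hQ1, Finset.mem_filter]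
      refine ⟨hPmmem _ (le_of_lt (lt_of_lt_of_le hlt (hPmle p (hQ2m p hp)))), hσp1, ?_, ?_⟩
      · rw [hσp2]
        omega
      · rw [hσp2]
        omega
    have hinj : ∀ x ∈ Q2, ∀ y ∈ Q2, σ x = σ y → x = y := by
      intro x _ y _ h
      have h2 := congrArg σ h
      rwa [hσσ, hσσ] at h2
    have hQ2sum : ∑ p ∈ Q2, (β' p.1 p.2 - S.β p.1 p.2)
        = - ∑ q ∈ Finset.image σ Q2, (β' q.1 q.2 - S.β q.1 q.2) := by
      rw [Finset.sum_image hinj]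
      rw [← Finset.sum_neg_distrib]
      apply Finset.sum_congr rfl
      intro p _
      exact hganti p
    rw [hQ2sum]
    have hsd := Finset.sum_sdiff (f := fun p : ((i : Fin l) × Fin (s i)) =>
      β' p.1 p.2 - S.β p.1 p.2) hσQ
    have hfin : ∑ p ∈ Q1, (β' p.1 p.2 - S.β p.1 p.2)
        + - ∑ q ∈ Finset.image σ Q2, (β' q.1 q.2 - S.β q.1 q.2)
        = ∑ p ∈ Q1 \ Finset.image σ Q2, (β' p.1 p.2 - S.β p.1 p.2) := by
      rw [← hsd]
      ring
    rw [hfin]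
    apply Finset.sum_nonpos
    intro p hp
    have hp1 : p ∈ Q1 := (Finset.mem_sdiff.mp hp).1
    rw [hQ1, Finset.mem_filter] at hp1
    obtain ⟨-, hpa, hpb, hpc⟩ := hp1
    obtain ⟨pi, pt⟩ := p
    have hpa' : pi = i₀ := hpa
    have hpb' : a₀.val ≤ pt.val := hpb
    have hpc' : pt.val < a₀.val + n' := hpc
    have hptlt := pt.isLt
    subst hpa'
    apply sub_nonpos.mpr
    rw [hβ'i₀ pt hpb' hpc']
    have hAeq : A (pt.val - a₀.val) = S.β pi pt := by
      rw [hAval (pt.val - a₀.val) (by omega)]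
      congr 1
      exact Fin.ext (by show a₀.val + (pt.val - a₀.val) = pt.val; omega)
    rw [← hAeq]
    exact le_of_lt (hBAlt _ (by omega))
  refine ⟨⟨β', hstrict⟩, hentries, hdom, ?_, hz'j⟩
  intro i hi
  rw [hz'pre i hi]
  exact hjmin i hi
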